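/- (Gap reduction with a strict pivot) Let p, p', v be three distinct points in ℝ^m with (p' − p)ᵀ(v − p) ≤ 0. Set δ = d(p, p'), r = d(p, v), and assume δ ≤ r. Let p'' be the point on the segment from p' to v closest to p and δ' = d(p, p''). Then δ' ≤ δ·r/√(r² + δ²) ≤ δ·√(1 − δ²/(2r²)) ≤ δ·exp(−δ²/(4r²)). -/

import Mathlib

set_option maxHeartbeats 1000000 in
/-- **Gap reduction with a strict pivot**. If `v` is a strict pivot at `p'`
(`⟪p' - p, v - p⟫ ≤ 0`), `δ = d(p,p') ≤ r = d(p,v)`, and `p''` is the point of the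
segment `p'v` closest to `p`, then
`δ' ≤ δr/√(r² + δ²) ≤ δ√(1 - δ²/(2r²)) ≤ δ·exp(-δ²/(4r²))`. -/
theorem gap_reduction_strict_pivot {m : ℕ} (p p' v : EuclideanSpace ℝ (Fin m))
    (hpp' : p ≠ p') (hpv : p ≠ v) (hp'v : p' ≠ v)
    (hpivot : inner ℝ (p' - p) (v - p) ≤ (0 : ℝ))
    (hδr : dist p p' ≤ dist p v)
    (p'' : EuclideanSpace ℝ (Fin m)) (hseg : p'' ∈ segment ℝ p' v)
    (hclosest : ∀ x ∈ segment ℝ p' v, dist p p'' ≤ dist p x) :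
    dist p p'' ≤ dist p p' * dist p v / Real.sqrt ((dist p v) ^ 2 + (dist p p') ^ 2) ∧
    dist p p' * dist p v / Real.sqrt ((dist p v) ^ 2 + (dist p p') ^ 2) ≤
      dist p p' * Real.sqrt (1 - (dist p p') ^ 2 / (2 * (dist p v) ^ 2)) ∧
    dist p p' * Real.sqrt (1 - (dist p p') ^ 2 / (2 * (dist p v) ^ 2)) ≤
      dist p p' * Real.exp (-(dist p p') ^ 2 / (4 * (dist p v) ^ 2)) := by
  set δ := dist p p' with hδdef
  set r := dist p v with hrdef
  have hδ0 : 0 < δ := dist_pos.2 hpp'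
  have hr0 : 0 < r := dist_pos.2 hpv
  have hS : (0:ℝ) < r^2 + δ^2 := by positivity
  have hsqrtS : 0 < Real.sqrt (r^2 + δ^2) := Real.sqrt_pos.2 hS
  have hsqS : (Real.sqrt (r^2 + δ^2))^2 = r^2 + δ^2 := Real.sq_sqrt hS.le
  refine ⟨?_, ?_, ?_⟩
  · -- Part 1
    set t : ℝ := δ^2 / (r^2 + δ^2) with ht
    have ht0 : 0 ≤ t := by positivity
    have ht1 : t ≤ 1 := by
      rw [ht, div_le_one hS]; nlinarith
    set x := (1-t) • p' + t • v with hx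
    have hmem : x ∈ segment ℝ p' v := ⟨1-t, t, by linarith, ht0, by ring, rfl⟩
    have hle := hclosest x hmem
    have hxp : x - p = (1-t) • (p' - p) + t • (v - p) := by
      rw [hx]; module
    have hnorm : (dist p x)^2 ≤ δ^2 * r^2 / (r^2 + δ^2) := by
      rw [dist_comm, dist_eq_norm, hxp, norm_add_sq_real]
      have e1 : ‖(1-t) • (p' - p)‖ = (1-t) * ‖p' - p‖ := by
        rw [norm_smul, Real.norm_of_nonneg (by linarith)]
      have e2 : ‖t • (v - p)‖ = t * ‖v - p‖ := by
        rw [norm_smul, Real.norm_of_nonneg ht0]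
      have e3 : (inner ℝ ((1-t) • (p' - p)) (t • (v - p)) : ℝ)
          = (1-t) * t * (inner ℝ (p'-p) (v-p) : ℝ) := by
        rw [real_inner_smul_left, real_inner_smul_right]; ring
      have hδn : ‖p' - p‖ = δ := by rw [hδdef, dist_comm, dist_eq_norm]
      have hrn : ‖v - p‖ = r := by rw [hrdef, dist_comm, dist_eq_norm]
      rw [e1, e2, e3, hδn, hrn]
      have hc : ((1-t) * t) * (inner ℝ (p'-p) (v-p) : ℝ) ≤ 0 :=
        mul_nonpos_of_nonneg_of_nonpos (by nlinarith) hpivot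
      have hval : ((1-t)*δ)^2 + (t*r)^2 = δ^2 * r^2 / (r^2 + δ^2) := by
        rw [ht]; field_simp; ring
      nlinarith [hc, hval]
    have : dist p x ≤ δ * r / Real.sqrt (r^2 + δ^2) := by
      have hrhs : 0 ≤ δ * r / Real.sqrt (r^2 + δ^2) := by positivity
      have hsq : (δ * r / Real.sqrt (r^2 + δ^2))^2 = δ^2 * r^2 / (r^2 + δ^2) := by
        rw [div_pow, hsqS]; ring_nf
      nlinarith [dist_nonneg (x := p) (y := x), hnorm, hsq, hrhs]
    linarith [hle]
  · -- Part 2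
    have hnn : (0:ℝ) ≤ 1 - δ^2 / (2*r^2) := by
      rw [sub_nonneg, div_le_one (by positivity)]; nlinarith
    have hkey : r / Real.sqrt (r^2 + δ^2) ≤ Real.sqrt (1 - δ^2 / (2*r^2)) := by
      rw [show r / Real.sqrt (r^2+δ^2) = Real.sqrt (r^2 / (r^2+δ^2)) by
        rw [Real.sqrt_div (by positivity : (0:ℝ) ≤ r^2), Real.sqrt_sq hr0.le]]
      apply Real.sqrt_le_sqrt
      have haux : δ^2/(2*r^2)*(r^2+δ^2) ≤ δ^2 := by
        rw [div_mul_eq_mul_div, div_le_iff₀ (by positivity : (0:ℝ) < 2*r^2)]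
        nlinarith [mul_self_le_mul_self hδ0.le hδr, sq_nonneg δ]
      rw [div_le_iff₀ hS, sub_mul, one_mul]
      linarith
    calc δ * r / Real.sqrt (r^2 + δ^2) = δ * (r / Real.sqrt (r^2 + δ^2)) := by ring
    _ ≤ δ * Real.sqrt (1 - δ^2 / (2*r^2)) := by
        exact mul_le_mul_of_nonneg_left hkey hδ0.le
  · -- Part 3
    have hkey : Real.sqrt (1 - δ^2 / (2*r^2)) ≤ Real.exp (-δ^2 / (4*r^2)) := by
      have h1 : (1 : ℝ) - δ^2/(2*r^2) ≤ Real.exp (-(δ^2/(2*r^2))) := by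
        have := Real.add_one_le_exp (-(δ^2/(2*r^2)))
        linarith
      calc Real.sqrt (1 - δ^2 / (2*r^2)) ≤ Real.sqrt (Real.exp (-(δ^2/(2*r^2)))) :=
            Real.sqrt_le_sqrt h1
      _ = Real.exp (-δ^2/(4*r^2)) := by
            rw [show (-(δ^2/(2*r^2))) = (-δ^2/(4*r^2)) + (-δ^2/(4*r^2)) by ring,
              Real.exp_add, ← sq, Real.sqrt_sq (Real.exp_nonneg _)]
    exact mul_le_mul_of_nonneg_left hkey hδ0.le
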